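/- arXiv:1806.02296 — 2 statements merged into one kernel-verified Lean document; each statement's English description precedes it below -/
import Mathlib

section
/- Let f : ℝ^N → ℝ^N be differentiable and locally homogeneous at x, and let ρ(x) = (1/2) xᵀ(x − f(x)). Then ∇ρ(x) = x − f(x) holds if and only if the Jacobian Jf(x) satisfies (Jf(x))ᵀ x = (Jf(x)) x. In particular, if Jf(x) is symmetric then ∇ρ(x) = x − f(x). -/
open scoped RealInnerProductSpace

theorem stmt_2 {N : ℕ} (f : EuclideanSpace ℝ (Fin N) → EuclideanSpace ℝ (Fin N))
    (x : EuclideanSpace ℝ (Fin N))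
    (hd : DifferentiableAt ℝ f x)
    (δ : ℝ) (hδ : 0 < δ)
    (hLH : ∀ ε : ℝ, |ε| < δ → f ((1 + ε) • x) = (1 + ε) • f x) :
    (gradient (fun z => (1/2 : ℝ) * (inner ℝ z (z - f z) : ℝ)) x = x - f x
      ↔ (ContinuousLinearMap.adjoint (fderiv ℝ f x)) x = (fderiv ℝ f x) x)
    ∧ (ContinuousLinearMap.adjoint (fderiv ℝ f x) = fderiv ℝ f x →
        gradient (fun z => (1/2 : ℝ) * (inner ℝ z (z - f z) : ℝ)) x = x - f x) := by
  set J := fderiv ℝ f x with hJ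
  -- Euler: J x = f x
  have h1 : HasDerivAt (fun ε : ℝ => (1 + ε) • x) x 0 := by
    simpa using ((hasDerivAt_id (0:ℝ)).const_add 1).smul_const x
  have h2 : HasDerivAt (fun ε : ℝ => f ((1 + ε) • x)) (J x) 0 := by
    have hf : HasFDerivAt f J ((fun ε : ℝ => (1 + ε) • x) 0) := by
      simpa using hd.hasFDerivAt
    exact hf.comp_hasDerivAt 0 h1
  have h3 : HasDerivAt (fun ε : ℝ => (1 + ε) • f x) (f x) 0 := by
    simpa using ((hasDerivAt_id (0:ℝ)).const_add 1).smul_const (f x)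
  have heq : (fun ε : ℝ => f ((1 + ε) • x)) =ᶠ[nhds 0] (fun ε : ℝ => (1 + ε) • f x) := by
    filter_upwards [Metric.ball_mem_nhds (0:ℝ) hδ] with ε hε
    exact hLH ε (by simpa [Real.dist_eq] using hε)
  have hE : J x = f x := h2.unique (h3.congr_of_eventuallyEq heq)
  -- gradient computation
  set g : EuclideanSpace ℝ (Fin N) :=
    x - (1/2 : ℝ) • f x - (1/2 : ℝ) • (ContinuousLinearMap.adjoint J) x with hg
  have hgrad : HasGradientAt (fun z => (1/2 : ℝ) * (inner ℝ z (z - f z) : ℝ)) g x := by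
    rw [hasGradientAt_iff_hasFDerivAt]
    have hinner : HasFDerivAt (fun z : EuclideanSpace ℝ (Fin N) => (inner ℝ z (z - f z) : ℝ))
        ((fderivInnerCLM ℝ (x, x - f x)).comp
          ((ContinuousLinearMap.id ℝ _).prod (ContinuousLinearMap.id ℝ _ - J))) x :=
      (hasFDerivAt_id x).inner ℝ ((hasFDerivAt_id x).sub hd.hasFDerivAt)
    have h4 := hinner.const_mul (1/2 : ℝ)
    convert h4 using 1
    · rfl
    ext v
    simp only [InnerProductSpace.toDual_apply_apply, ContinuousLinearMap.smul_apply,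
      ContinuousLinearMap.comp_apply, ContinuousLinearMap.prod_apply,
      ContinuousLinearMap.id_apply, ContinuousLinearMap.sub_apply, fderivInnerCLM_apply,
      smul_eq_mul, starRingEnd_apply, star_trivial]
    rw [hg]
    have hadj : ⟪(ContinuousLinearMap.adjoint J) x, v⟫ = ⟪x, J v⟫ :=
      ContinuousLinearMap.adjoint_inner_left J v x
    simp only [inner_sub_left, inner_sub_right, inner_smul_left, real_inner_comm x v, real_inner_comm (f x) v, hadj,
      starRingEnd_apply, star_trivial]
    ring
  have hgval : gradient (fun z => (1/2 : ℝ) * (inner ℝ z (z - f z) : ℝ)) x = g := hgrad.gradient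
  rw [hgval]
  have key : g = x - f x ↔ (ContinuousLinearMap.adjoint J) x = J x := by
    rw [hg, hE]
    constructor
    · intro h
      apply smul_right_injective (EuclideanSpace ℝ (Fin N)) (by norm_num : (1/2:ℝ) ≠ 0)
      linear_combination (norm := module) -h
    · intro h
      rw [h]
      module
  exact ⟨key, fun h => key.mpr (by rw [h])⟩
end

section
/- Let ℓ : ℝ^N → ℝ be proper, convex, and lower semicontinuous, let f : ℝ^N → ℝ^N be nonexpansive, let λ > 0 and L > 1, and define T(x) = prox_{ℓ/(λL)}((1/L)(f(x) − (1−L)x)). Then T is α-averaged with α = max{2/(1+L), 2/3}. -/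
open scoped RealInnerProductSpace

/-- An operator `P` is `α`-averaged if `P = α B + (1-α) I` for some nonexpansive `B`. -/
def IsAveraged {N : ℕ} (α : ℝ) (P : EuclideanSpace ℝ (Fin N) → EuclideanSpace ℝ (Fin N)) : Prop :=
  ∃ B : EuclideanSpace ℝ (Fin N) → EuclideanSpace ℝ (Fin N),
    LipschitzWith 1 B ∧ ∀ x, P x = α • B x + (1 - α) • x

set_option maxHeartbeats 1000000 in
theorem stmt_14 {N : ℕ} (ℓ : EuclideanSpace ℝ (Fin N) → ℝ)
    (hconv : ConvexOn ℝ Set.univ ℓ) (hlsc : LowerSemicontinuous ℓ)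
    (f : EuclideanSpace ℝ (Fin N) → EuclideanSpace ℝ (Fin N))
    (hf : LipschitzWith 1 f)
    (lam L : ℝ) (hlam : 0 < lam) (hL : 1 < L)
    (p : EuclideanSpace ℝ (Fin N) → EuclideanSpace ℝ (Fin N))
    (hp : ∀ v z, (lam * L)⁻¹ * ℓ (p v) + (1/2) * ‖p v - v‖^2
                  ≤ (lam * L)⁻¹ * ℓ z + (1/2) * ‖z - v‖^2)
    (T : EuclideanSpace ℝ (Fin N) → EuclideanSpace ℝ (Fin N))
    (hT : ∀ x, T x = p ((1 / L) • (f x - (1 - L) • x))) :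
    IsAveraged (max (2 / (1 + L)) (2 / 3)) T := by
  have hL0 : (0:ℝ) < L := lt_trans one_pos hL
  set α : ℝ := max (2 / (1 + L)) (2 / 3) with hα
  have hα23 : (2:ℝ)/3 ≤ α := le_max_right _ _
  have hα1 : α < 1 := by
    rw [hα]; apply max_lt
    · rw [div_lt_one (by linarith)]; linarith
    · norm_num
  have hα0 : (0:ℝ) < α := lt_of_lt_of_le (by norm_num) hα23
  -- Step 1: subgradient-type inequality for the prox operator
  have key : ∀ v z : EuclideanSpace ℝ (Fin N),
      (inner ℝ (v - p v) (z - p v) : ℝ) ≤ (lam*L)⁻¹ * ℓ z - (lam*L)⁻¹ * ℓ (p v) := by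
    intro v z
    set m := p v with hm
    by_contra hcon
    push_neg at hcon
    set D : ℝ := (lam*L)⁻¹ * ℓ z - (lam*L)⁻¹ * ℓ m - (inner ℝ (v - m) (z - m) : ℝ) with hD
    have hDneg : D < 0 := by rw [hD]; linarith
    set C : ℝ := ‖z - m‖^2 / 2 with hC'
    have hC : 0 ≤ C := by positivity
    set s : ℝ := -D / (2*(C+1)) with hs'
    have hs0 : 0 < s := by
      apply div_pos (by linarith) (by linarith)
    set t : ℝ := min 1 s with ht'
    have ht0 : 0 < t := lt_min one_pos hs0
    have ht1 : t ≤ 1 := min_le_left _ _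
    have hts : t ≤ s := min_le_right _ _
    have h1 := hp v (m + t • (z - m))
    rw [← hm] at h1
    have h2 : ℓ (m + t • (z - m)) ≤ (1-t) * ℓ m + t * ℓ z := by
      have hcomb := hconv.2 (Set.mem_univ m) (Set.mem_univ z)
        (by linarith : (0:ℝ) ≤ 1 - t) (le_of_lt ht0) (by ring)
      have heq : (1-t) • m + t • z = m + t • (z - m) := by module
      rwa [heq] at hcomb
    have h3 : ‖m + t • (z - m) - v‖^2
        = ‖m - v‖^2 + 2*t*(inner ℝ (m - v) (z - m) : ℝ) + t^2*‖z-m‖^2 := by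
      have he : m + t • (z - m) - v = (m - v) + t • (z - m) := by abel
      rw [he, @norm_add_sq_real, real_inner_smul_right, norm_smul,
        Real.norm_eq_abs, mul_pow, sq_abs]
      ring
    have hflip : (inner ℝ (m - v) (z - m) : ℝ) = -(inner ℝ (v - m) (z - m) : ℝ) := by
      rw [← inner_neg_left]; congr 1; abel
    have hμ : (0:ℝ) ≤ (lam*L)⁻¹ := by positivity
    have h4 : 0 ≤ D + t * C := by
      have h5 : (lam*L)⁻¹ * ℓ (m + t • (z - m)) ≤
          (lam*L)⁻¹ * ((1-t) * ℓ m + t * ℓ z) :=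
        mul_le_mul_of_nonneg_left h2 hμ
      rw [h3, hflip] at h1
      rw [hD, hC']
      nlinarith [h1, h5]
    have htC : t * C ≤ s * C := mul_le_mul_of_nonneg_right hts hC
    clear_value D C s t
    have hse : s * (2*(C+1)) = -D := by
      rw [hs']
      exact div_mul_cancel₀ _ (ne_of_gt (by linarith : (0:ℝ) < 2*(C+1)))
    ring_nf at hse
    linarith [h4, htC, hC, hDneg, hs0, hse]
  -- Step 2: firm nonexpansiveness of p
  have firm : ∀ u v : EuclideanSpace ℝ (Fin N),
      ‖p u - p v‖^2 ≤ (inner ℝ (u - v) (p u - p v) : ℝ) := by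
    intro u v
    have h1 := key u (p v)
    have h2 := key v (p u)
    have hsum : (inner ℝ (u - p u) (p v - p u) : ℝ) + (inner ℝ (v - p v) (p u - p v) : ℝ) ≤ 0 := by linarith
    have e1 : (inner ℝ (u - p u) (p v - p u) : ℝ) = -(inner ℝ (u - p u) (p u - p v) : ℝ) := by
      rw [← inner_neg_right]; congr 1; abel
    have e2 : (inner ℝ (v - p v) (p u - p v) : ℝ) - (inner ℝ (u - p u) (p u - p v) : ℝ)
        = (inner ℝ ((v - p v) - (u - p u)) (p u - p v) : ℝ) := (inner_sub_left _ _ _).symm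
    have e3 : (v - p v) - (u - p u) = (v - u) + (p u - p v) := by abel
    rw [e1] at hsum
    rw [e3, inner_add_left, real_inner_self_eq_norm_sq] at e2
    have e4 : (inner ℝ (v - u) (p u - p v) : ℝ) = -(inner ℝ (u - v) (p u - p v) : ℝ) := by
      rw [← inner_neg_left]; congr 1; abel
    rw [e4] at e2
    linarith
  -- main estimate
  have main : ∀ x y, ‖T x - T y - (1-α) • (x - y)‖ ≤ α * ‖x - y‖ := by
    intro x y
    set q1 := (1 / L) • (f x - (1 - L) • x) with hq1
    set q2 := (1 / L) • (f y - (1 - L) • y) with hq2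
    set dp := T x - T y with hdp
    have hdpe : dp = p q1 - p q2 := by rw [hdp, hT, hT]
    set a := ‖dp‖ with ha'
    set d := ‖x - y‖ with hd'
    have ha0 : 0 ≤ a := norm_nonneg _
    have hd0 : 0 ≤ d := norm_nonneg _
    set s := (inner ℝ (f x - f y) (dp) : ℝ) with hs'
    set i := (inner ℝ (x - y) (dp) : ℝ) with hi'
    have hq : q1 - q2 = (1/L) • (f x - f y) + ((L-1)/L) • (x - y) := by
      rw [hq1, hq2]; module
    have hinner : (inner ℝ (q1 - q2) (dp) : ℝ) = (s + (L-1)*i)/L := by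
      rw [hq, inner_add_left, real_inner_smul_left, real_inner_smul_left, ← hs', ← hi']
      field_simp
    have hfd : ‖f x - f y‖ ≤ d := by
      have := hf.dist_le_mul x y
      simpa [dist_eq_norm, hd'] using this
    have hfirm := firm q1 q2
    rw [← hdpe, hinner, ← ha'] at hfirm
    have hfirmL : a^2 * L ≤ s + (L-1)*i := (le_div_iff₀ hL0).mp hfirm
    have hs : s ≤ d * a := by
      calc s ≤ ‖f x - f y‖ * ‖dp‖ := real_inner_le_norm _ _
        _ ≤ d * a := mul_le_mul_of_nonneg_right hfd ha0
    have hqn : ‖q1 - q2‖ ≤ d := by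
      rw [hq]
      calc ‖(1/L) • (f x - f y) + ((L-1)/L) • (x - y)‖
          ≤ ‖(1/L) • (f x - f y)‖ + ‖((L-1)/L) • (x - y)‖ := norm_add_le _ _
        _ = (1/L) * ‖f x - f y‖ + ((L-1)/L) * d := by
            rw [norm_smul, norm_smul, Real.norm_eq_abs, Real.norm_eq_abs,
              abs_of_pos (by positivity), abs_of_nonneg (div_nonneg (by linarith) (le_of_lt hL0)), hd']
        _ ≤ (1/L) * d + ((L-1)/L) * d := by
            have : (0:ℝ) ≤ 1/L := by positivity
            nlinarith [hfd]
        _ = d := by field_simp; ring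
    have had : a ≤ d := by
      have h6 : a^2 ≤ d * a := by
        calc a^2 ≤ (s + (L-1)*i)/L := hfirm
          _ = (inner ℝ (q1 - q2) (dp) : ℝ) := hinner.symm
          _ ≤ ‖q1 - q2‖ * a := real_inner_le_norm _ _
          _ ≤ d * a := mul_le_mul_of_nonneg_right hqn ha0
      nlinarith [h6, ha0, hd0]
    have hicomm : (inner ℝ (dp) (x - y) : ℝ) = i := real_inner_comm _ _
    have goal2 : ‖dp - (1-α) • (x - y)‖^2 ≤ (α*d)^2 := by
      rw [@norm_sub_sq_real, real_inner_smul_right, hicomm, norm_smul,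
        Real.norm_eq_abs, abs_of_nonneg (by linarith : (0:ℝ) ≤ 1-α),
        mul_pow, ← ha', ← hd']
      have hscal : a^2 - 2*((1-α)*i) + (1-α)^2*d^2 ≤ (α*d)^2 := by
        rcases le_total L 2 with hc | hc
        · have hαe : α = 2/(1+L) := by
            rw [hα, max_eq_left]
            rw [div_le_div_iff₀ (by norm_num) (by linarith)]; linarith
          have h1L : (0:ℝ) < 1 + L := by linarith
          have key2 : (0:ℝ) ≤ (3 - L) * d - (L - 1) * a := by nlinarith [had, ha0, hd0]
          have hh := mul_nonneg (by linarith : (0:ℝ) ≤ d - a) key2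
          have H1 := mul_le_mul_of_nonneg_left hfirmL (by linarith : (0:ℝ) ≤ 2*(1+L))
          have H2 := mul_le_mul_of_nonneg_left hs (by linarith : (0:ℝ) ≤ 2*(1+L))
          have P : (1+L)^2*a^2 - 2*(1+L)*((L-1)*i) + (L-1)^2*d^2 ≤ 4*d^2 := by
            nlinarith [H1, H2, mul_nonneg (le_of_lt h1L) hh]
          rw [hαe, ← sub_nonneg]
          have e : (2/(1+L)*d)^2 - (a^2 - 2*((1-2/(1+L))*i) + (1-2/(1+L))^2*d^2)
              = (4*d^2 - ((1+L)^2*a^2 - 2*(1+L)*((L-1)*i) + (L-1)^2*d^2))/(1+L)^2 := by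
            field_simp
            ring
          rw [e]
          exact div_nonneg (by linarith) (by positivity)
        · have hαe : α = 2/3 := by
            rw [hα, max_eq_right]
            rw [div_le_div_iff₀ (by linarith) (by norm_num)]; linarith
          have hLm : (0:ℝ) < L - 1 := by linarith
          have key2 : (0:ℝ) ≤ (L-3)*a + (L-1)*d := by nlinarith [had, ha0, hd0]
          have hh := mul_nonneg (by linarith : (0:ℝ) ≤ d - a) key2
          rw [hαe]
          nlinarith [hfirmL, hs, hh, hLm]
      nlinarith [hscal]
    have := Real.sqrt_le_sqrt goal2
    rwa [Real.sqrt_sq (norm_nonneg _), Real.sqrt_sq (by positivity)] at this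
  -- assemble
  refine ⟨fun x => α⁻¹ • (T x - (1-α) • x), ?_, ?_⟩
  · rw [lipschitzWith_iff_dist_le_mul]
    intro x y
    rw [dist_eq_norm, dist_eq_norm]
    have he : α⁻¹ • (T x - (1-α) • x) - α⁻¹ • (T y - (1-α) • y)
        = α⁻¹ • (T x - T y - (1-α) • (x - y)) := by
      rw [← smul_sub]; congr 1; module
    rw [he, norm_smul, Real.norm_eq_abs, abs_of_pos (inv_pos.mpr hα0),
      NNReal.coe_one, one_mul, inv_mul_le_iff₀ hα0]
    exact main x y
  · intro x
    rw [smul_smul, mul_inv_cancel₀ (ne_of_gt hα0), one_smul]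
    abel
end
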